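/- Fine–Wilf style structure of periodic strings: if a string p of length m is periodic (not aperiodic), then there exist a string v of length q with 1 ≤ q ≤ m/2, an integer k ≥ 2, and a prefix u of v, such that p = v^k u, where q is the smallest positive shift d ≤ m/2 under which p agrees with itself, and moreover v is primitive (v is not a concatenation of two or more copies of a shorter string). -/
import Mathlib
set_option maxHeartbeats 1000000


/-- Structure of periodic strings: if `p` of length `m` is periodic (some shift
`d` with `1 ≤ d ≤ m/2` agrees with `p` on the overlap), then, taking `q` to be
the least such shift (the period), `p = v^k u` where `v` is the prefix of `p` of
length `q`, `k = m / q ≥ 2`, `u` is a (proper) prefix of `v` of length `m % q`,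
and `v` is primitive. -/
theorem periodic_structure {α : Type*} {m : ℕ} (p : Fin m → α)
    (hper : ∃ d, 1 ≤ d ∧ d ≤ m / 2 ∧
      ∀ k, ∀ hk : k < m, d ≤ k → p ⟨k, hk⟩ = p ⟨k - d, by omega⟩) :
    ∃ q, 1 ≤ q ∧ q ≤ m / 2 ∧
      -- q is a period of p
      (∀ k, ∀ hk : k < m, q ≤ k → ∀ h : k - q < m, p ⟨k, hk⟩ = p ⟨k - q, h⟩) ∧
      -- q is the smallest positive shift under which p agrees with itself
      (∀ d, 1 ≤ d → d < q →
        ∃ k, ∃ hk : k < m, d ≤ k ∧ p ⟨k, hk⟩ ≠ p ⟨k - d, by omega⟩) ∧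
      -- p = v^k u with k ≥ 2 and u a proper prefix of v (|u| = m % q < q):
      (∃ k ulen, 2 ≤ k ∧ ulen < q ∧ m = k * q + ulen) ∧
      -- every character of p is the corresponding character of v = p[0..q-1]
      (∀ j, ∀ hj : j < m, ∀ h : j % q < m, p ⟨j, hj⟩ = p ⟨j % q, h⟩) ∧
      -- v is primitive: v is not a concatenation of ≥ 2 copies of a shorter string
      (∀ r, 1 ≤ r → r < q → r ∣ q →
        ∃ j, ∃ hj : j < q, ∃ h1 : j < m, ∃ h2 : j % r < m,
          p ⟨j, h1⟩ ≠ p ⟨j % r, h2⟩) := by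
  classical
  have key : ∀ a b (ha : a < m) (hb : b < m), a = b → p ⟨a, ha⟩ = p ⟨b, hb⟩ := by
    rintro a b ha hb rfl; rfl
  have hex : ∃ d, 1 ≤ d ∧ d ≤ m / 2 ∧
      ∀ k, ∀ hk : k < m, d ≤ k → p ⟨k, hk⟩ = p ⟨k - d, by omega⟩ := hper
  have hspec := Nat.find_spec hex
  have hmin : ∀ d, d < Nat.find hex → ¬ (1 ≤ d ∧ d ≤ m / 2 ∧
      ∀ k, ∀ hk : k < m, d ≤ k → p ⟨k, hk⟩ = p ⟨k - d, by omega⟩) :=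
    fun d hd => Nat.find_min hex hd
  obtain ⟨q, hg⟩ : ∃ q, Nat.find hex = q := ⟨_, rfl⟩
  rw [hg] at hspec hmin
  obtain ⟨h1, h2, h3⟩ := hspec
  -- every character equals the corresponding one in the first block
  have hmod : ∀ j (hj : j < m),
      p ⟨j, hj⟩ = p ⟨j % q, Nat.lt_of_le_of_lt (Nat.mod_le j q) hj⟩ := by
    intro j
    induction j using Nat.strong_induction_on with
    | _ j ih =>
      intro hj
      by_cases hc : j < q
      · exact key _ _ _ _ (Nat.mod_eq_of_lt hc).symm
      · push_neg at hc
        have hq0 : 0 < q := h1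
        have e1 : p ⟨j, hj⟩ = p ⟨j - q, by omega⟩ := h3 j hj hc
        rw [e1, ih (j - q) (by omega) (by omega)]
        exact key _ _ _ _ (Nat.mod_eq_sub_mod hc).symm
  refine ⟨q, h1, h2, ?_, ?_, ?_, ?_, ?_⟩
  · intro k hk hkq h
    exact h3 k hk hkq
  · intro d hd1 hdq
    have hnot := hmin d hdq
    push_neg at hnot
    have h2' : d ≤ m / 2 := le_trans (le_of_lt hdq) h2
    obtain ⟨k, hk, hdk, hne⟩ := hnot hd1 h2'
    exact ⟨k, hk, hdk, hne⟩
  · have hq0 : 0 < q := h1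
    have h2q : 2 * q ≤ m := by
      have := Nat.div_mul_le_self m 2
      omega
    refine ⟨m / q, m % q, ?_, Nat.mod_lt m hq0, (Nat.div_add_mod' m q).symm⟩
    rw [Nat.le_div_iff_mul_le hq0]; omega
  · intro j hj h
    rw [hmod j hj]
  · intro r hr1 hrq hdvd
    by_contra hcon
    push_neg at hcon
    have hq0 : 0 < q := h1
    have hQr : 1 ≤ r ∧ r ≤ m / 2 ∧
        ∀ k, ∀ hk : k < m, r ≤ k → p ⟨k, hk⟩ = p ⟨k - r, by omega⟩ := by
      refine ⟨hr1, by omega, ?_⟩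
      intro k hk hkr
      have hkqm : k % q < m := Nat.lt_of_le_of_lt (Nat.mod_le k q) hk
      have hkrm : (k - r) % q < m := Nat.lt_of_le_of_lt (Nat.mod_le _ q) (by omega)
      have e1 : p ⟨k, hk⟩ = p ⟨k % q % r, Nat.lt_of_le_of_lt (Nat.mod_le _ r) hkqm⟩ := by
        rw [hmod k hk]
        exact hcon (k % q) (Nat.mod_lt k hq0) hkqm _
      have e2 : p ⟨k - r, by omega⟩ =
          p ⟨(k - r) % q % r, Nat.lt_of_le_of_lt (Nat.mod_le _ r) hkrm⟩ := by
        rw [hmod (k - r) (by omega)]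
        exact hcon ((k - r) % q) (Nat.mod_lt _ hq0) hkrm _
      have e3 : k % q % r = (k - r) % q % r := by
        rw [Nat.mod_mod_of_dvd _ hdvd, Nat.mod_mod_of_dvd _ hdvd]
        exact Nat.mod_eq_sub_mod hkr
      exact e1.trans ((key _ _ _ _ e3).trans (e2.symm.trans (key _ _ _ _ rfl)))
    exact hmin r hrq hQr
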